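/- Let λ > 0 and S = diag(s₁, …, s_d) with distinct positive entries. Suppose A, B ∈ ℝ^{d×k} satisfy λBᵀ = Aᵀ(S − ABᵀ) and λA = (S − ABᵀ)B. Then AAᵀ is a diagonal matrix, and, denoting by aᵢ, bᵢ the i-th rows of A, B, for all i ≠ j one has aᵢᵀaⱼ = 0, bᵢᵀbⱼ = 0, and aᵢᵀbⱼ = 0, and for all i, aᵢ = bᵢ. -/

import Mathlib

open Matrix

/-- Squared Frobenius norm of a real matrix. -/
noncomputable def frobSq {m n : ℕ} (A : Matrix (Fin m) (Fin n) ℝ) : ℝ :=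
  ∑ i, ∑ j, (A i j) ^ 2

/-- Frobenius norm. -/
noncomputable def frobNorm {m n : ℕ} (A : Matrix (Fin m) (Fin n) ℝ) : ℝ :=
  Real.sqrt (frobSq A)

lemma wwT_posSemidef {m n : ℕ} (W : Matrix (Fin m) (Fin n) ℝ) :
    (W * Wᵀ).PosSemidef := by
  simpa [Matrix.conjTranspose_eq_transpose_of_trivial] using
    W.posSemidef_self_mul_conjTranspose

/-- The positive semidefinite square root of a positive semidefinite matrix (Mathlib's former
`Matrix.PosSemidef.sqrt`, removed upstream; restored with its old definition). -/
noncomputable def Matrix.PosSemidef.sqrt {n : Type*} [Fintype n] [DecidableEq n]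
    {A : Matrix n n ℝ} (hA : A.PosSemidef) : Matrix n n ℝ :=
  hA.1.eigenvectorUnitary.1 * diagonal ((↑) ∘ (Real.sqrt ·) ∘ hA.1.eigenvalues) *
    (star hA.1.eigenvectorUnitary : Matrix n n ℝ)

/-- Nuclear norm: trace of the PSD square root of `W * Wᵀ`. -/
noncomputable def nuclearNorm {m n : ℕ} (W : Matrix (Fin m) (Fin n) ℝ) : ℝ :=
  (wwT_posSemidef W).sqrt.trace

lemma aux_pair {k : ℕ} (G : Matrix (Fin k) (Fin k) ℝ) (lam si : ℝ) (u w : Fin k → ℝ)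
    (h : ∀ l, (∑ m, u m * G m l) + lam * u l = si * w l) (v : Fin k → ℝ) :
    (∑ l, ∑ m, u m * G m l * v l) + lam * ∑ l, u l * v l = si * ∑ l, w l * v l := by
  have h1 : ∀ l, (∑ m, u m * G m l * v l) + lam * (u l * v l) = si * (w l * v l) := by
    intro l
    rw [← Finset.sum_mul]
    linear_combination (h l) * v l
  calc (∑ l, ∑ m, u m * G m l * v l) + lam * ∑ l, u l * v l
      = ∑ l, ((∑ m, u m * G m l * v l) + lam * (u l * v l)) := by
        rw [Finset.sum_add_distrib, ← Finset.mul_sum]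
    _ = ∑ l, si * (w l * v l) := Finset.sum_congr rfl fun l _ => h1 l
    _ = si * ∑ l, w l * v l := (Finset.mul_sum _ _ _).symm

lemma aux_symm {k : ℕ} (G : Matrix (Fin k) (Fin k) ℝ) (hG : ∀ m l, G m l = G l m)
    (u v : Fin k → ℝ) :
    ∑ l, ∑ m, u m * G m l * v l = ∑ l, ∑ m, v m * G m l * u l := by
  rw [Finset.sum_comm]
  refine Finset.sum_congr rfl fun x _ => Finset.sum_congr rfl fun y _ => ?_
  rw [hG x y]
  ring

lemma aux_quad {d k : ℕ} (B : Matrix (Fin d) (Fin k) ℝ) (v : Fin k → ℝ) :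
    ∑ l, ∑ m, v m * ((Bᵀ * B) m l) * v l = ∑ p, (∑ m, B p m * v m) ^ 2 := by
  calc ∑ l, ∑ m, v m * ((Bᵀ * B) m l) * v l
      = ∑ l, ∑ m, ∑ p, B p m * v m * (B p l * v l) := by
        refine Finset.sum_congr rfl fun l _ => Finset.sum_congr rfl fun m _ => ?_
        rw [Matrix.mul_apply]
        rw [Finset.mul_sum, Finset.sum_mul]
        exact Finset.sum_congr rfl fun p _ => by simp only [Matrix.transpose_apply]; ring
    _ = ∑ l, ∑ p, ∑ m, B p m * v m * (B p l * v l) :=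
        Finset.sum_congr rfl fun l _ => Finset.sum_comm
    _ = ∑ p, ∑ l, ∑ m, B p m * v m * (B p l * v l) := Finset.sum_comm
    _ = ∑ p, (∑ m, B p m * v m) ^ 2 := by
        refine Finset.sum_congr rfl fun p _ => ?_
        rw [sq, Finset.sum_mul]
        refine Finset.sum_comm.trans ?_
        refine Finset.sum_congr rfl fun m _ => ?_
        rw [Finset.mul_sum]

/-- equilibrium of the regularized 2-layer linear network with
`S = diag(s)`, `s` having distinct positive entries: `AAᵀ` is diagonal, distinct
rows of `A`, of `B`, and mixed rows are orthogonal, and each row of `A` equals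
the corresponding row of `B`. -/
theorem two_layer_equilibrium {d k : ℕ} (lam : ℝ) (hlam : 0 < lam)
    (s : Fin d → ℝ) (hs_pos : ∀ i, 0 < s i) (hs_inj : Function.Injective s)
    (A B : Matrix (Fin d) (Fin k) ℝ)
    (heq1 : lam • Bᵀ = Aᵀ * (Matrix.diagonal s - A * Bᵀ))
    (heq2 : lam • A = (Matrix.diagonal s - A * Bᵀ) * B) :
    (∀ i j, i ≠ j → (A * Aᵀ) i j = 0) ∧
    (∀ i j, i ≠ j → ∑ l, A i l * A j l = 0) ∧
    (∀ i j, i ≠ j → ∑ l, B i l * B j l = 0) ∧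
    (∀ i j, i ≠ j → ∑ l, A i l * B j l = 0) ∧
    (∀ i, A i = B i) := by
  have hlam0 : lam ≠ 0 := ne_of_gt hlam
  have hsnz : ∀ i, s i ≠ 0 := fun i => ne_of_gt (hs_pos i)
  set G : Matrix (Fin k) (Fin k) ℝ := Bᵀ * B with hGdef
  -- AᵀA = BᵀB
  have hG : Aᵀ * A = G := by
    have h1 : Aᵀ * (lam • A) = Aᵀ * ((Matrix.diagonal s - A * Bᵀ) * B) := by rw [heq2]
    rw [Matrix.mul_smul, ← Matrix.mul_assoc, ← heq1, Matrix.smul_mul] at h1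
    exact smul_right_injective _ hlam0 h1
  have hAmat : A * G + lam • A = Matrix.diagonal s * B := by
    rw [hGdef, ← Matrix.mul_assoc, heq2, Matrix.sub_mul]
    abel
  have hBmat : B * G + lam • B = Matrix.diagonal s * A := by
    have ht := congrArg Matrix.transpose heq1
    simp only [Matrix.transpose_smul, Matrix.transpose_mul, Matrix.transpose_sub,
      Matrix.transpose_transpose, Matrix.diagonal_transpose] at ht
    rw [← hG, ← Matrix.mul_assoc, ht, Matrix.sub_mul]
    abel
  have E1 : ∀ i l, (∑ m, A i m * G m l) + lam * A i l = s i * B i l := by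
    intro i l
    have h := congrFun (congrFun hAmat i) l
    rw [Matrix.diagonal_mul] at h
    simpa [Matrix.add_apply, Matrix.smul_apply, Matrix.mul_apply, smul_eq_mul] using h
  have E2 : ∀ i l, (∑ m, B i m * G m l) + lam * B i l = s i * A i l := by
    intro i l
    have h := congrFun (congrFun hBmat i) l
    rw [Matrix.diagonal_mul] at h
    simpa [Matrix.add_apply, Matrix.smul_apply, Matrix.mul_apply, smul_eq_mul] using h
  have hGsym : ∀ m l, G m l = G l m := by
    intro m l
    rw [hGdef]
    simp only [Matrix.mul_apply, Matrix.transpose_apply]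
    exact Finset.sum_congr rfl fun p _ => mul_comm _ _
  have dcomm : ∀ (u v : Fin k → ℝ), ∑ l, u l * v l = ∑ l, v l * u l :=
    fun u v => Finset.sum_congr rfl fun l _ => mul_comm _ _
  have hssq : ∀ i j : Fin d, i ≠ j → s i ^ 2 - s j ^ 2 ≠ 0 := by
    intro i j hij h
    have h2 : (s i - s j) * (s i + s j) = 0 := by linear_combination h
    rcases mul_eq_zero.mp h2 with h3 | h3
    · exact hs_inj.ne hij (by linarith)
    · have := hs_pos i; have := hs_pos j; linarith
  have horth : ∀ i j, i ≠ j → (∑ l, A i l * A j l) = 0 ∧ (∑ l, B i l * B j l) = 0 ∧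
      (∑ l, A i l * B j l) = 0 := by
    intro i j hij
    have KAij := aux_pair G lam (s i) (A i) (B i) (E1 i) (A j)
    have KAji := aux_pair G lam (s j) (A j) (B j) (E1 j) (A i)
    have KBij := aux_pair G lam (s i) (B i) (A i) (E2 i) (B j)
    have KBji := aux_pair G lam (s j) (B j) (A j) (E2 j) (B i)
    have KABij := aux_pair G lam (s i) (A i) (B i) (E1 i) (B j)
    have KABji := aux_pair G lam (s j) (A j) (B j) (E1 j) (B i)
    have KBAij := aux_pair G lam (s i) (B i) (A i) (E2 i) (A j)
    have KBAji := aux_pair G lam (s j) (B j) (A j) (E2 j) (A i)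
    have symQ := aux_symm G hGsym (A i) (A j)
    have symR := aux_symm G hGsym (B i) (B j)
    have symP1 := aux_symm G hGsym (A i) (B j)
    have symP2 := aux_symm G hGsym (A j) (B i)
    have daa := dcomm (A j) (A i)
    have dbb := dcomm (B j) (B i)
    have dab := dcomm (B j) (A i)
    have dba := dcomm (A j) (B i)
    -- canonicalize
    rw [daa, dab, ← symQ] at KAji
    rw [dbb, dba, ← symR] at KBji
    rw [← symP1, dab, daa] at KBAji
    rw [symP2, dba, dbb] at KABji
    -- x = ∑ A i l * B j l, y = ∑ B i l * A j l
    have hxy1 : s i * (∑ l, B i l * A j l) = s j * (∑ l, A i l * B j l) := by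
      linarith [KAij, KAji]
    have hxy2 : s i * (∑ l, A i l * B j l) = s j * (∑ l, B i l * A j l) := by
      linarith [KBij, KBji]
    have hy : (∑ l, B i l * A j l) = 0 := by
      have h0 : (s i ^ 2 - s j ^ 2) * (∑ l, B i l * A j l) = 0 := by
        linear_combination s i * hxy1 + s j * hxy2
      exact (mul_eq_zero.mp h0).resolve_left (hssq i j hij)
    have hx : (∑ l, A i l * B j l) = 0 := by
      have h0 : s i * (∑ l, A i l * B j l) = 0 := by rw [hxy2, hy, mul_zero]
      exact (mul_eq_zero.mp h0).resolve_left (hsnz i)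
    have h2a : s i * (∑ l, B i l * B j l) = s j * (∑ l, A i l * A j l) := by
      linarith [KABij, KBAji]
    have h2b : s j * (∑ l, B i l * B j l) = s i * (∑ l, A i l * A j l) := by
      linarith [KABji, KBAij]
    have hb : (∑ l, B i l * B j l) = 0 := by
      have h0 : (s i ^ 2 - s j ^ 2) * (∑ l, B i l * B j l) = 0 := by
        linear_combination s i * h2a - s j * h2b
      exact (mul_eq_zero.mp h0).resolve_left (hssq i j hij)
    have ha : (∑ l, A i l * A j l) = 0 := by
      have h0 : s i * (∑ l, A i l * A j l) = 0 := by rw [← h2b, hb, mul_zero]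
      exact (mul_eq_zero.mp h0).resolve_left (hsnz i)
    exact ⟨ha, hb, hx⟩
  have hrows : ∀ i, A i = B i := by
    intro i
    set v : Fin k → ℝ := fun l => A i l - B i l with hvdef
    have hv : ∀ l, (∑ m, v m * G m l) + (lam + s i) * v l = 0 * v l := by
      intro l
      have hsplit : ∑ m, v m * G m l = (∑ m, A i m * G m l) - ∑ m, B i m * G m l := by
        rw [← Finset.sum_sub_distrib]
        exact Finset.sum_congr rfl fun m _ => by rw [hvdef]; ring
      rw [hsplit, hvdef, zero_mul]
      linear_combination (E1 i l) - (E2 i l)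
    have key := aux_pair G (lam + s i) 0 v v hv v
    rw [zero_mul] at key
    have quad := aux_quad B v
    rw [← hGdef] at quad
    rw [quad] at key
    have hnn1 : 0 ≤ ∑ p, (∑ m, B p m * v m) ^ 2 :=
      Finset.sum_nonneg fun p _ => sq_nonneg _
    have hnn2 : 0 ≤ ∑ l, v l * v l :=
      Finset.sum_nonneg fun l _ => mul_self_nonneg _
    have hpos : 0 < lam + s i := by linarith [hs_pos i]
    have hY : (∑ l, v l * v l) ≤ 0 := by
      by_contra h
      push_neg at h
      nlinarith [mul_pos hpos h]
    have hzero : (∑ l, v l * v l) = 0 := le_antisymm hY hnn2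
    have hterm := (Finset.sum_eq_zero_iff_of_nonneg
      (fun l _ => mul_self_nonneg (v l))).mp hzero
    funext l
    have hvl : v l = 0 := mul_self_eq_zero.mp (hterm l (Finset.mem_univ l))
    have : A i l - B i l = 0 := by rw [hvdef] at hvl; exact hvl
    linarith
  refine ⟨?_, fun i j hij => (horth i j hij).1, fun i j hij => (horth i j hij).2.1,
    fun i j hij => (horth i j hij).2.2, hrows⟩
  intro i j hij
  have := (horth i j hij).1
  simpa [Matrix.mul_apply, Matrix.transpose_apply] using this
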